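/- Optimality of the bias condition for constant average distortion: if α_n ≤ 1/n, then for the identity map f : ({-1,1}^n, Hamming metric d) → (ℝ^n, Euclidean norm), one has E_{μ⊗μ}|f(ε) - f(ε')| ≥ 2(1 - (1 - 2α_n(1-α_n))^n), where μ is the α_n-biased product measure; in particular, combined with E d(ε,ε') = 2nα_n(1-α_n) ≤ 2, the identity map (which is 2-Lipschitz from the Hamming metric to the Euclidean metric) achieves μ-average distortion bounded by a universal constant. -/

import Mathlib

open Finset

/-- weight of a point of the biased cube, encoded by `b : Fin n → Bool`. -/
noncomputable def cubeWeight (α : ℝ) {n : ℕ} (b : Fin n → Bool) : ℝ :=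
  ∏ i, if b i then α else 1 - α

/-- sign vector in Euclidean space associated to `b : Fin n → Bool`. -/
noncomputable def sgnVecE {n : ℕ} (b : Fin n → Bool) : EuclideanSpace ℝ (Fin n) :=
  WithLp.toLp 2 (fun i => if b i then 1 else -1)

lemma coord_le_norm {n : ℕ} (x : EuclideanSpace ℝ (Fin n)) (i : Fin n) :
    |x i| ≤ ‖x‖ := by
  rw [EuclideanSpace.norm_eq]
  have : |x i| = Real.sqrt (‖x i‖ ^ 2) := by
    rw [Real.sqrt_sq_eq_abs]; simp
  rw [this]
  apply Real.sqrt_le_sqrt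
  exact Finset.single_le_sum (f := fun j => ‖x j‖ ^ 2)
    (fun j _ => sq_nonneg _) (Finset.mem_univ i)

lemma norm_sgn_ge {n : ℕ} {b b' : Fin n → Bool} (h : b ≠ b') :
    (2:ℝ) ≤ ‖sgnVecE b - sgnVecE b'‖ := by
  obtain ⟨i, hi⟩ := Function.ne_iff.mp h
  have := coord_le_norm (sgnVecE b - sgnVecE b') i
  have hv : |(sgnVecE b - sgnVecE b') i| = 2 := by
    simp only [PiLp.sub_apply, sgnVecE]
    cases hb : b i <;> cases hb' : b' i <;> simp_all <;> norm_num
  linarith [hv ▸ this]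

lemma sum_cubeWeight_pow (α : ℝ) (n : ℕ) (k : ℕ) :
    ∑ b : Fin n → Bool, (cubeWeight α b) ^ k
      = (α ^ k + (1 - α) ^ k) ^ n := by
  have : ∀ b : Fin n → Bool, (cubeWeight α b) ^ k
      = ∏ i, (fun t : Bool => (if t then α else 1 - α) ^ k) (b i) := by
    intro b; rw [cubeWeight, ← Finset.prod_pow]
  simp_rw [this]
  rw [← Fintype.sum_pow (fun t : Bool => (if t then α else 1 - α) ^ k) n]
  simp [Fintype.sum_bool]

/-- for `α_n ≤ 1/n`, the identity map achieves constant average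
distortion: the average Euclidean displacement is at least
`2(1 - (1 - 2α(1-α))^n)` while the expected Hamming distance `2nα(1-α)` is at most 2. -/
theorem identity_map_average_distortion (n : ℕ) (hn : 0 < n) (α : ℝ)
    (hα : α ∈ Set.Ioc (0:ℝ) (1/2)) (hαn : α ≤ 1 / n) :
    2 * (1 - (1 - 2 * α * (1 - α)) ^ n)
        ≤ ∑ b : Fin n → Bool, ∑ b' : Fin n → Bool,
            cubeWeight α b * cubeWeight α b' * ‖sgnVecE b - sgnVecE b'‖ ∧
    2 * n * α * (1 - α) ≤ 2 := by
  obtain ⟨hα0, hα2⟩ := hα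
  have hw : ∀ b : Fin n → Bool, 0 ≤ cubeWeight α b := by
    intro b
    apply Finset.prod_nonneg
    intro i _
    split <;> linarith
  constructor
  · have key : ∀ b b' : Fin n → Bool,
        cubeWeight α b * cubeWeight α b' * (if b = b' then 0 else 2)
          ≤ cubeWeight α b * cubeWeight α b' * ‖sgnVecE b - sgnVecE b'‖ := by
      intro b b'
      by_cases h : b = b'
      · simp [h]
      · simp only [h, if_neg, if_false]
        exact mul_le_mul_of_nonneg_left (norm_sgn_ge h)
          (mul_nonneg (hw b) (hw b'))
    refine le_trans ?_ (Finset.sum_le_sum fun b _ =>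
      Finset.sum_le_sum fun b' _ => key b b')
    have expand : ∑ b : Fin n → Bool, ∑ b' : Fin n → Bool,
        cubeWeight α b * cubeWeight α b' * (if b = b' then 0 else 2)
        = 2 * ((∑ b : Fin n → Bool, cubeWeight α b) ^ 2
            - ∑ b : Fin n → Bool, (cubeWeight α b) ^ 2) := by
      have : ∀ b b' : Fin n → Bool,
          cubeWeight α b * cubeWeight α b' * (if b = b' then 0 else 2)
          = 2 * (cubeWeight α b * cubeWeight α b')
            - (if b = b' then 2 * (cubeWeight α b * cubeWeight α b') else 0) := by
        intro b b'; split <;> ring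
      simp_rw [this, Finset.sum_sub_distrib, Finset.sum_ite_eq,
        Finset.mem_univ, if_true]
      rw [sq, Finset.sum_mul_sum, mul_sub]
      congr 1
      · rw [Finset.mul_sum]
        refine Finset.sum_congr rfl fun b _ => ?_
        rw [Finset.mul_sum]
      · rw [Finset.mul_sum]
        refine Finset.sum_congr rfl fun b _ => ?_
        ring
    rw [expand]
    have h1 : ∑ b : Fin n → Bool, cubeWeight α b = 1 := by
      have := sum_cubeWeight_pow α n 1
      simpa using this
    have h2 : ∑ b : Fin n → Bool, (cubeWeight α b) ^ 2
        = (1 - 2 * α * (1 - α)) ^ n := by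
      have := sum_cubeWeight_pow α n 2
      rw [this]; ring_nf
    rw [h1, h2]; norm_num
  · have hn' : (0:ℝ) < n := Nat.cast_pos.mpr hn
    have h1 : (n:ℝ) * α ≤ 1 := by
      rw [one_div] at hαn
      calc (n:ℝ) * α ≤ (n:ℝ) * (n:ℝ)⁻¹ := by
            apply mul_le_mul_of_nonneg_left hαn (le_of_lt hn')
        _ = 1 := mul_inv_cancel₀ (ne_of_gt hn')
    nlinarith [mul_nonneg (le_of_lt hn') (le_of_lt hα0)]
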